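/- For every positive integer n, the submonoid S_n of ℕ generated by 15, 15 + 2^{n+2}, 15 + 2^{n+2} + 2^{n+1}, and 15 + 2^{n+2} + 2^{n+1} + 2^n is an almost symmetric numerical semigroup of type three, minimally generated by these four odd integers, and PF(S_n) = {15 + 2^{n+3}, 2·(15 + 2^{n+3}), 3·(15 + 2^{n+3})}. -/

import Mathlib

/-- A numerical semigroup: an addiive submonoid of `ℕ` with finite complement. -/
structure NumericalSemigroup where
  carrier : Set ℕ
  zero_mem : 0 ∈ carrier
  add_mem : ∀ {a b : ℕ}, a ∈ carrier → b ∈ carrier → a + b ∈ carrier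
  cofinite : Set.Finite carrierᶜ

namespace NumericalSemigroup

/-- The set of pseudo-Frobenius numbers of `S`. -/
def PF (S : NumericalSemigroup) : Set ℕ :=
  {f | f ∉ S.carrier ∧ ∀ s ∈ S.carrier, s ≠ 0 → f + s ∈ S.carrier}

/-- The Frobenius number of `S` (the maximum of the complement). -/
noncomputable def frob (S : NumericalSemigroup) : ℕ := sSup S.carrierᶜ

/-- The genus of `S`: the number of gaps. -/
noncomputable def genus (S : NumericalSemigroup) : ℕ := S.carrierᶜ.ncard

/-- The type of `S`: the number of pseudo-Frobenius numbers. -/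
noncomputable def typ (S : NumericalSemigroup) : ℕ := S.PF.ncard

/-- `S` is almost symmetric if `2 g(S) = F(S) + t(S)`. -/
def AlmostSymmetric (S : NumericalSemigroup) : Prop :=
  2 * S.genus = S.frob + S.typ

/-- `S` is pseudo-symmetric if `2 g(S) = F(S) + 2`. -/
def PseudoSymmetric (S : NumericalSemigroup) : Prop :=
  2 * S.genus = S.frob + 2

/-- `S` is minimally generated by the four (distinct) elements `n1, n2, n3, n4`. -/
def MinGen4 (S : NumericalSemigroup) (n1 n2 n3 n4 : ℕ) : Prop :=
  [n1, n2, n3, n4].Pairwise (· ≠ ·) ∧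
  S.carrier = (AddSubmonoid.closure ({n1, n2, n3, n4} : Set ℕ) : Set ℕ) ∧
  ∀ B ⊂ ({n1, n2, n3, n4} : Set ℕ),
    S.carrier ≠ (AddSubmonoid.closure B : Set ℕ)

end NumericalSemigroup

/-- `alphaMin x a b c` is `min {k ≥ 1 : k·x ∈ ⟨a, b, c⟩}`. -/
noncomputable def alphaMin (x a b c : ℕ) : ℕ :=
  sInf {k : ℕ | 1 ≤ k ∧ (k * x) ∈ (AddSubmonoid.closure ({a, b, c} : Set ℕ) : Set ℕ)}

namespace ATF

open AddSubmonoid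

def Tq (q : ℕ) : AddSubmonoid ℕ := closure {15, 15+4*q, 15+6*q, 15+7*q}

lemma mul_mem_of {M : AddSubmonoid ℕ} {x : ℕ} (h : x ∈ M) (a : ℕ) : a * x ∈ M := by
  induction a with
  | zero => simpa using M.zero_mem
  | succ n ih => rw [Nat.succ_mul]; exact add_mem ih h

lemma mem_rep {q x : ℕ} :
    x ∈ Tq q ↔ ∃ a b c d, x = a*15 + b*(15+4*q) + c*(15+6*q) + d*(15+7*q) := by
  constructor
  · intro hx
    induction hx using closure_induction with
    | mem y hy =>
      rcases hy with rfl|rfl|rfl|rfl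
      · exact ⟨1,0,0,0, by ring⟩
      · exact ⟨0,1,0,0, by ring⟩
      · exact ⟨0,0,1,0, by ring⟩
      · exact ⟨0,0,0,1, by ring⟩
    | zero => exact ⟨0,0,0,0, by ring⟩
    | add y z hy hz ihy ihz =>
      obtain ⟨a,b,c,d, rfl⟩ := ihy
      obtain ⟨a',b',c',d', rfl⟩ := ihz
      exact ⟨a+a', b+b', c+c', d+d', by ring⟩
  · rintro ⟨a,b,c,d, rfl⟩
    have h1 : (15:ℕ) ∈ Tq q := subset_closure (by simp)
    have h2 : (15+4*q:ℕ) ∈ Tq q := subset_closure (by simp)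
    have h3 : (15+6*q:ℕ) ∈ Tq q := subset_closure (by simp)
    have h4 : (15+7*q:ℕ) ∈ Tq q := subset_closure (by simp)
    exact add_mem (add_mem (add_mem (mul_mem_of h1 a) (mul_mem_of h2 b))
      (mul_mem_of h3 c)) (mul_mem_of h4 d)

lemma mem_rep3 {g1 g2 g3 x : ℕ} :
    x ∈ AddSubmonoid.closure ({g1,g2,g3} : Set ℕ) ↔ ∃ a b c, x = a*g1 + b*g2 + c*g3 := by
  constructor
  · intro hx
    induction hx using closure_induction with
    | mem y hy =>
      rcases hy with rfl|rfl|rfl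
      · exact ⟨1,0,0, by ring⟩
      · exact ⟨0,1,0, by ring⟩
      · exact ⟨0,0,1, by ring⟩
    | zero => exact ⟨0,0,0, by ring⟩
    | add y z hy hz ihy ihz =>
      obtain ⟨a,b,c, rfl⟩ := ihy
      obtain ⟨a',b',c', rfl⟩ := ihz
      exact ⟨a+a', b+b', c+c', by ring⟩
  · rintro ⟨a,b,c, rfl⟩
    have h1 : g1 ∈ AddSubmonoid.closure ({g1,g2,g3} : Set ℕ) := subset_closure (by simp)
    have h2 : g2 ∈ AddSubmonoid.closure ({g1,g2,g3} : Set ℕ) := subset_closure (by simp)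
    have h3 : g3 ∈ AddSubmonoid.closure ({g1,g2,g3} : Set ℕ) := subset_closure (by simp)
    exact add_mem (add_mem (mul_mem_of h1 a) (mul_mem_of h2 b)) (mul_mem_of h3 c)

def L : Finset ℕ := {0,4,6,7,8,10,11,12,13,14,16,17,18,20,24}
def U (m : ℕ) : ℕ := (m+6)/7

def Bb (m : ℕ) : ℕ := match m with
  | 4 => 1 | 8 => 2 | 10 => 1 | 11 => 1 | 16 => 1 | 17 => 1 | 18 => 1 | _ => 0
def Bc (m : ℕ) : ℕ := match m with
  | 6 => 1 | 10 => 1 | 12 => 2 | 13 => 1 | 16 => 2 | 17 => 1 | 20 => 1 | 24 => 4 | _ => 0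
def Bd (m : ℕ) : ℕ := match m with
  | 7 => 1 | 11 => 1 | 13 => 1 | 14 => 2 | 17 => 1 | 18 => 2 | 20 => 2 | _ => 0

lemma Btable : ∀ m ∈ L, 4*Bb m + 6*Bc m + 7*Bd m = m ∧ Bb m + Bc m + Bd m = U m := by decide

lemma classrep (b c d : ℕ) :
    ∃ m ∈ L, m ≤ 4*b+6*c+7*d ∧ (4*b+6*c+7*d) % 15 = m % 15 := by
  set v := 4*b+6*c+7*d with hv
  rcases le_or_gt v 24 with h|h
  · have hv9 : v ≠ 1 ∧ v ≠ 2 ∧ v ≠ 3 ∧ v ≠ 5 ∧ v ≠ 9 := by omega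
    interval_cases v <;> first
      | omega
      | exact ⟨0, by decide, by omega, by decide⟩
      | exact ⟨4, by decide, by omega, by decide⟩
      | exact ⟨6, by decide, by omega, by decide⟩
      | exact ⟨7, by decide, by omega, by decide⟩
      | exact ⟨8, by decide, by omega, by decide⟩
      | exact ⟨10, by decide, by omega, by decide⟩
      | exact ⟨11, by decide, by omega, by decide⟩
      | exact ⟨12, by decide, by omega, by decide⟩
      | exact ⟨13, by decide, by omega, by decide⟩
      | exact ⟨14, by decide, by omega, by decide⟩
      | exact ⟨16, by decide, by omega, by decide⟩
      | exact ⟨17, by decide, by omega, by decide⟩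
      | exact ⟨18, by decide, by omega, by decide⟩
      | exact ⟨20, by decide, by omega, by decide⟩
      | exact ⟨24, by decide, by omega, by decide⟩
  · have key : ∀ r < 15, ∃ m ∈ L, m % 15 = r ∧ m ≤ 24 := by decide
    obtain ⟨m, hm, hr, h24⟩ := key (v % 15) (Nat.mod_lt _ (by norm_num))
    exact ⟨m, hm, by omega, by omega⟩

variable {q : ℕ}

lemma mem_norm {x : ℕ} :
    x ∈ Tq q ↔ ∃ m ∈ L, ∃ k, x = 15 * U m + q * m + 15 * k := by
  constructor
  · intro hx
    obtain ⟨a,b,c,d, rfl⟩ := mem_rep.mp hx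
    obtain ⟨m, hm, hle, hmod⟩ := classrep b c d
    set v := 4*b+6*c+7*d with hv
    set i := (v - m)/15 with hi
    have hvi : v = m + 15*i := by omega
    have hx2 : a*15 + b*(15+4*q) + c*(15+6*q) + d*(15+7*q)
        = 15*(a+b+c+d) + q*m + 15*(q*i) := by
      have e : a*15 + b*(15+4*q) + c*(15+6*q) + d*(15+7*q)
          = 15*(a+b+c+d) + q*(4*b+6*c+7*d) := by ring
      rw [e, ← hv, hvi]; ring
    refine ⟨m, hm, (a+b+c+d) - U m + q*i, ?_⟩
    rw [hx2]
    have h7 : v ≤ 7*(a+b+c+d) := by omega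
    simp only [U]
    omega
  · rintro ⟨m, hm, k, rfl⟩
    obtain ⟨h1, h2⟩ := Btable m hm
    refine mem_rep.mpr ⟨k, Bb m, Bc m, Bd m, ?_⟩
    have e : k*15 + Bb m*(15+4*q) + Bc m*(15+6*q) + Bd m*(15+7*q)
        = 15*k + 15*(Bb m + Bc m + Bd m) + q*(4*Bb m+6*Bc m+7*Bd m) := by ring
    rw [e, h1, h2]
    omega

variable (hs : q % 15 = 1 ∨ q % 15 = 2 ∨ q % 15 = 4 ∨ q % 15 = 8)
include hs

lemma class_ex (x : ℕ) : ∃ m ∈ L, (q*m) % 15 = x % 15 := by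
  have key : ∀ s ∈ ({1,2,4,8} : Finset ℕ), ∀ r < 15, ∃ m ∈ L, (s * (m % 15)) % 15 = r := by
    decide
  obtain ⟨m, hm, he⟩ := key (q % 15) (by rcases hs with h|h|h|h <;> simp [h])
    (x % 15) (Nat.mod_lt _ (by norm_num))
  refine ⟨m, hm, ?_⟩
  rw [Nat.mul_mod]
  exact he

lemma class_uniq {m m' : ℕ} (hm : m ∈ L) (hm' : m' ∈ L)
    (h : (q*m) % 15 = (q*m') % 15) : m = m' := by
  have key : ∀ s ∈ ({1,2,4,8} : Finset ℕ), ∀ m ∈ L, ∀ m' ∈ L,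
      (s * (m % 15)) % 15 = (s * (m' % 15)) % 15 → m = m' := by decide
  refine key (q % 15) (by rcases hs with h|h|h|h <;> simp [h]) m hm m' hm' ?_
  rw [Nat.mul_mod, Nat.mul_mod q m'] at h
  exact h

omit hs

lemma mem_iff_le {x : ℕ} :
    x ∈ Tq q ↔ ∃ m ∈ L, (q*m) % 15 = x % 15 ∧ 15 * U m + q * m ≤ x := by
  constructor
  · intro hx
    obtain ⟨m, hm, k, rfl⟩ := mem_norm.mp hx
    exact ⟨m, hm, by omega, by omega⟩
  · rintro ⟨m, hm, hmod, hle⟩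
    exact mem_norm.mpr ⟨m, hm, (x - (15 * U m + q * m))/15, by omega⟩

include hs

lemma not_mem_of_lt {x m : ℕ} (hm : m ∈ L) (hmod : (q*m) % 15 = x % 15)
    (hlt : x < 15 * U m + q * m) : x ∉ Tq q := by
  intro hx
  obtain ⟨m', hm', hmod', hle'⟩ := mem_iff_le.mp hx
  have := class_uniq hs hm' hm (by omega)
  subst this
  omega

omit hs

def Gfin (q : ℕ) : Finset ℕ :=
  L.biUnion fun m => (Finset.range (U m + q*m/15)).image fun i => (q*m) % 15 + 15*i

include hs

lemma mem_Gfin {x : ℕ} : x ∈ Gfin q ↔ x ∉ Tq q := by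
  simp only [Gfin, Finset.mem_biUnion, Finset.mem_image, Finset.mem_range]
  constructor
  · rintro ⟨m, hm, i, hi, rfl⟩
    exact not_mem_of_lt hs hm (by omega) (by omega)
  · intro hx
    obtain ⟨m, hm, hmod⟩ := class_ex hs x
    have hlt : x < 15 * U m + q * m := by
      by_contra h
      exact hx (mem_iff_le.mpr ⟨m, hm, hmod, by omega⟩)
    exact ⟨m, hm, (x - (q*m) % 15)/15, by omega, by omega⟩

lemma Gcard : (Gfin q).card = 24 + 12*q := by
  rw [Gfin, Finset.card_biUnion]
  · have hterm : ∀ m ∈ L,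
        ((Finset.range (U m + q*m/15)).image fun i => (q*m) % 15 + 15*i).card
          = U m + q*m/15 := by
      intro m hm
      rw [Finset.card_image_of_injective _ (fun i j h => by omega), Finset.card_range]
    rw [Finset.sum_congr rfl hterm]
    simp only [L]
    rw [Finset.sum_insert (by decide), Finset.sum_insert (by decide), Finset.sum_insert (by decide),
      Finset.sum_insert (by decide), Finset.sum_insert (by decide), Finset.sum_insert (by decide),
      Finset.sum_insert (by decide), Finset.sum_insert (by decide), Finset.sum_insert (by decide),
      Finset.sum_insert (by decide), Finset.sum_insert (by decide), Finset.sum_insert (by decide),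
      Finset.sum_insert (by decide), Finset.sum_insert (by decide), Finset.sum_singleton]
    simp only [U]
    rcases hs with h|h|h|h <;> omega
  · intro m hm m' hm' hne
    simp only [Finset.disjoint_left, Finset.mem_image, Finset.mem_range]
    rintro a ⟨i, hi, rfl⟩ ⟨j, hj, he⟩
    exact hne (class_uniq hs hm hm' (by omega))


lemma nf1 : 15+8*q ∉ Tq q :=
  not_mem_of_lt hs (by decide : (8:ℕ) ∈ L) (by omega) (by simp only [U]; omega)
lemma nf2 : 30+16*q ∉ Tq q :=
  not_mem_of_lt hs (by decide : (16:ℕ) ∈ L) (by omega) (by simp only [U]; omega)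
lemma nf3 : 45+24*q ∉ Tq q :=
  not_mem_of_lt hs (by decide : (24:ℕ) ∈ L) (by omega) (by simp only [U]; omega)
lemma nf4 : 15+10*q ∉ Tq q :=
  not_mem_of_lt hs (by decide : (10:ℕ) ∈ L) (by omega) (by simp only [U]; omega)
lemma nf5 : 15+11*q ∉ Tq q :=
  not_mem_of_lt hs (by decide : (11:ℕ) ∈ L) (by omega) (by simp only [U]; omega)
lemma nf6 : 30+17*q ∉ Tq q :=
  not_mem_of_lt hs (by decide : (17:ℕ) ∈ L) (by omega) (by simp only [U]; omega)
lemma nf7 : 30+18*q ∉ Tq q :=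
  not_mem_of_lt hs (by decide : (18:ℕ) ∈ L) (by omega) (by simp only [U]; omega)

omit hs

lemma pf_all {x : ℕ} (hx1 : x + 15 ∈ Tq q) (hx2 : x + (15+4*q) ∈ Tq q)
    (hx3 : x + (15+6*q) ∈ Tq q) (hx4 : x + (15+7*q) ∈ Tq q) :
    ∀ s ∈ Tq q, s ≠ 0 → x + s ∈ Tq q := by
  intro s hsT hne
  obtain ⟨a,b,c,d, rfl⟩ := mem_rep.mp hsT
  rcases Nat.eq_zero_or_pos a with ha|ha
  · rcases Nat.eq_zero_or_pos b with hb|hb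
    · rcases Nat.eq_zero_or_pos c with hc|hc
      · rcases Nat.eq_zero_or_pos d with hd|hd
        · exact absurd (by simp [ha,hb,hc,hd]) hne
        · obtain ⟨d', rfl⟩ : ∃ d', d = d'+1 := ⟨d-1, by omega⟩
          have e : x + (a*15 + b*(15+4*q) + c*(15+6*q) + (d'+1)*(15+7*q))
              = (x + (15+7*q)) + (a*15 + b*(15+4*q) + c*(15+6*q) + d'*(15+7*q)) := by ring
          rw [e]
          exact add_mem hx4 (mem_rep.mpr ⟨a,b,c,d', rfl⟩)
      · obtain ⟨c', rfl⟩ : ∃ c', c = c'+1 := ⟨c-1, by omega⟩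
        have e : x + (a*15 + b*(15+4*q) + (c'+1)*(15+6*q) + d*(15+7*q))
            = (x + (15+6*q)) + (a*15 + b*(15+4*q) + c'*(15+6*q) + d*(15+7*q)) := by ring
        rw [e]
        exact add_mem hx3 (mem_rep.mpr ⟨a,b,c',d, rfl⟩)
    · obtain ⟨b', rfl⟩ : ∃ b', b = b'+1 := ⟨b-1, by omega⟩
      have e : x + (a*15 + (b'+1)*(15+4*q) + c*(15+6*q) + d*(15+7*q))
          = (x + (15+4*q)) + (a*15 + b'*(15+4*q) + c*(15+6*q) + d*(15+7*q)) := by ring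
      rw [e]
      exact add_mem hx2 (mem_rep.mpr ⟨a,b',c,d, rfl⟩)
  · obtain ⟨a', rfl⟩ : ∃ a', a = a'+1 := ⟨a-1, by omega⟩
    have e : x + ((a'+1)*15 + b*(15+4*q) + c*(15+6*q) + d*(15+7*q))
        = (x + 15) + (a'*15 + b*(15+4*q) + c*(15+6*q) + d*(15+7*q)) := by ring
    rw [e]
    exact add_mem hx1 (mem_rep.mpr ⟨a',b,c,d, rfl⟩)

include hs

lemma PF_char (hq : 2 ≤ q) (x : ℕ) :
    (x ∉ Tq q ∧ ∀ s ∈ Tq q, s ≠ 0 → x + s ∈ Tq q) ↔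
      (x = 15+8*q ∨ x = 2*(15+8*q) ∨ x = 3*(15+8*q)) := by
  constructor
  · rintro ⟨hnot, hall⟩
    obtain ⟨m, hm, hmod⟩ := class_ex hs x
    have hlt : x < 15 * U m + q * m := by
      by_contra h
      exact hnot (mem_iff_le.mpr ⟨m, hm, hmod, by omega⟩)
    have h15T : (15:ℕ) ∈ Tq q := mem_rep.mpr ⟨1,0,0,0, by ring⟩
    have hx15 := hall 15 h15T (by omega)
    obtain ⟨m', hm', hmod', hle'⟩ := mem_iff_le.mp hx15
    have hmm : m' = m := class_uniq hs hm' hm (by omega)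
    subst hmm
    have hg2 : (15+4*q:ℕ) ∈ Tq q := mem_rep.mpr ⟨0,1,0,0, by ring⟩
    have hg3 : (15+6*q:ℕ) ∈ Tq q := mem_rep.mpr ⟨0,0,1,0, by ring⟩
    have hg4 : (15+7*q:ℕ) ∈ Tq q := mem_rep.mpr ⟨0,0,0,1, by ring⟩
    have hv2 := hall _ hg2 (by omega)
    have hv3 := hall _ hg3 (by omega)
    have hv4 := hall _ hg4 (by omega)
    simp only [L, Finset.mem_insert, Finset.mem_singleton] at hm
    simp only [U] at hlt hle'
    rcases hm with rfl|rfl|rfl|rfl|rfl|rfl|rfl|rfl|rfl|rfl|rfl|rfl|rfl|rfl|rfl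
    · omega
    · -- m = 4, x = 4q
      have hx : x = 4*q := by omega
      rw [hx, show 4*q + (15+4*q) = 15+8*q from by ring] at hv2
      exact absurd hv2 (nf1 hs)
    · -- m = 6, x = 6q
      have hx : x = 6*q := by omega
      rw [hx, show 6*q + (15+4*q) = 15+10*q from by ring] at hv2
      exact absurd hv2 (nf4 hs)
    · -- m = 7
      have hx : x = 7*q := by omega
      rw [hx, show 7*q + (15+4*q) = 15+11*q from by ring] at hv2
      exact absurd hv2 (nf5 hs)
    · -- m = 8 : x = 15+8q
      left; omega
    · -- m = 10, x = 15+10q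
      have hx : x = 15+10*q := by omega
      rw [hx, show 15+10*q + (15+6*q) = 30+16*q from by ring] at hv3
      exact absurd hv3 (nf2 hs)
    · -- m = 11
      have hx : x = 15+11*q := by omega
      rw [hx, show 15+11*q + (15+6*q) = 30+17*q from by ring] at hv3
      exact absurd hv3 (nf6 hs)
    · -- m = 12
      have hx : x = 15+12*q := by omega
      rw [hx, show 15+12*q + (15+6*q) = 30+18*q from by ring] at hv3
      exact absurd hv3 (nf7 hs)
    · -- m = 13
      have hx : x = 15+13*q := by omega
      rw [hx, show 15+13*q + (15+4*q) = 30+17*q from by ring] at hv2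
      exact absurd hv2 (nf6 hs)
    · -- m = 14
      have hx : x = 15+14*q := by omega
      rw [hx, show 15+14*q + (15+4*q) = 30+18*q from by ring] at hv2
      exact absurd hv2 (nf7 hs)
    · -- m = 16 : x = 30+16q
      right; left; omega
    · -- m = 17
      have hx : x = 30+17*q := by omega
      rw [hx, show 30+17*q + (15+7*q) = 45+24*q from by ring] at hv4
      exact absurd hv4 (nf3 hs)
    · -- m = 18
      have hx : x = 30+18*q := by omega
      rw [hx, show 30+18*q + (15+6*q) = 45+24*q from by ring] at hv3
      exact absurd hv3 (nf3 hs)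
    · -- m = 20
      have hx : x = 30+20*q := by omega
      rw [hx, show 30+20*q + (15+4*q) = 45+24*q from by ring] at hv2
      exact absurd hv2 (nf3 hs)
    · -- m = 24 : x = 45+24q
      right; right; omega
  · rintro (rfl|rfl|rfl)
    · refine ⟨nf1 hs, pf_all ?_ ?_ ?_ ?_⟩
      · exact mem_rep.mpr ⟨0,2,0,0, by ring⟩
      · exact mem_rep.mpr ⟨0,0,2,0, by ring⟩
      · exact mem_rep.mpr ⟨0,0,0,2, by ring⟩
      · exact mem_rep.mpr ⟨q+2,0,0,0, by ring⟩
    · refine ⟨by rw [show 2*(15+8*q) = 30+16*q from by ring]; exact nf2 hs,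
        pf_all ?_ ?_ ?_ ?_⟩
      · exact mem_rep.mpr ⟨0,1,2,0, by ring⟩
      · exact mem_rep.mpr ⟨0,0,1,2, by ring⟩
      · exact mem_rep.mpr ⟨q+2,0,0,1, by ring⟩
      · exact mem_rep.mpr ⟨q+1,2,0,0, by ring⟩
    · refine ⟨by rw [show 3*(15+8*q) = 45+24*q from by ring]; exact nf3 hs,
        pf_all ?_ ?_ ?_ ?_⟩
      · exact mem_rep.mpr ⟨0,0,4,0, by ring⟩
      · exact mem_rep.mpr ⟨q+2,0,1,1, by ring⟩
      · exact mem_rep.mpr ⟨2*q+4,0,0,0, by ring⟩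
      · exact mem_rep.mpr ⟨q+1,1,2,0, by ring⟩

lemma frob_eq (hq : 2 ≤ q) : sSup ((Tq q : Set ℕ)ᶜ) = 45+24*q := by
  have hmem : (45+24*q) ∈ ((Tq q : Set ℕ))ᶜ := by
    simpa [Set.mem_compl_iff] using nf3 hs
  have hub : ∀ x ∈ ((Tq q : Set ℕ))ᶜ, x ≤ 45+24*q := by
    intro x hx
    by_contra h
    push_neg at h
    apply hx
    show x ∈ Tq q
    obtain ⟨m, hm, hmod⟩ := class_ex hs x
    have hm24 : m ≤ 24 := by
      have : ∀ m' ∈ L, m' ≤ 24 := by decide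
      exact this m hm
    have hU : U m ≤ 4 := by simp only [U]; omega
    have hqm : q*m ≤ q*24 := Nat.mul_le_mul_left q hm24
    exact mem_iff_le.mpr ⟨m, hm, hmod, by omega⟩
  exact le_antisymm (csSup_le ⟨_, hmem⟩ hub) (le_csSup ⟨45+24*q, fun x hx => hub x hx⟩ hmem)

omit hs

lemma not_g1 (hq : 2 ≤ q) : (15:ℕ) ∉ AddSubmonoid.closure ({15+4*q, 15+6*q, 15+7*q} : Set ℕ) := by
  intro h
  obtain ⟨a,b,c, h⟩ := mem_rep3.mp h
  rw [show a*(15+4*q)+b*(15+6*q)+c*(15+7*q) = 15*(a+b+c)+q*(4*a+6*b+7*c) from by ring] at h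
  rcases Nat.eq_zero_or_pos (a+b+c) with h0|h0
  · obtain ⟨ha,hb,hc⟩ : a = 0 ∧ b = 0 ∧ c = 0 := by omega
    subst ha; subst hb; subst hc; simp at h
  · have h1 : 1*(4*a+6*b+7*c) ≤ q*(4*a+6*b+7*c) := Nat.mul_le_mul (by omega) (le_refl _)
    omega

lemma not_g2 (hq : 2 ≤ q) (hs : q % 15 = 1 ∨ q % 15 = 2 ∨ q % 15 = 4 ∨ q % 15 = 8) :
    (15+4*q:ℕ) ∉ AddSubmonoid.closure ({15, 15+6*q, 15+7*q} : Set ℕ) := by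
  intro h
  obtain ⟨a,b,c, h⟩ := mem_rep3.mp h
  rw [show a*15+b*(15+6*q)+c*(15+7*q) = 15*(a+b+c)+q*(6*b+7*c) from by ring] at h
  rcases Nat.eq_zero_or_pos (b+c) with hbc|hbc
  · have hb : b = 0 := by omega
    have hc : c = 0 := by omega
    rw [hb, hc] at h
    rcases hs with h'|h'|h'|h' <;> omega
  · have h6 : q*6 ≤ q*(6*b+7*c) := Nat.mul_le_mul_left q (by omega)
    omega

lemma not_g3 (hq : 2 ≤ q) (hs : q % 15 = 1 ∨ q % 15 = 2 ∨ q % 15 = 4 ∨ q % 15 = 8) :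
    (15+6*q:ℕ) ∉ AddSubmonoid.closure ({15, 15+4*q, 15+7*q} : Set ℕ) := by
  intro h
  obtain ⟨a,b,c, h⟩ := mem_rep3.mp h
  rw [show a*15+b*(15+4*q)+c*(15+7*q) = 15*(a+b+c)+q*(4*b+7*c) from by ring] at h
  rcases Nat.lt_or_ge (4*b+7*c) 7 with hv|hv
  · -- c = 0, b ≤ 1
    have hc : c = 0 := by omega
    have hb : b ≤ 1 := by omega
    subst hc
    interval_cases b <;> rcases hs with h'|h'|h'|h' <;> omega
  · have h7 : q*7 ≤ q*(4*b+7*c) := Nat.mul_le_mul_left q hv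
    omega

lemma not_g4 (hq : 2 ≤ q) (hs : q % 15 = 1 ∨ q % 15 = 2 ∨ q % 15 = 4 ∨ q % 15 = 8) :
    (15+7*q:ℕ) ∉ AddSubmonoid.closure ({15, 15+4*q, 15+6*q} : Set ℕ) := by
  intro h
  obtain ⟨a,b,c, h⟩ := mem_rep3.mp h
  rw [show a*15+b*(15+4*q)+c*(15+6*q) = 15*(a+b+c)+q*(4*b+6*c) from by ring] at h
  rcases Nat.lt_or_ge (4*b+6*c) 8 with hv|hv
  · have hb : b ≤ 1 := by omega
    have hc : c ≤ 1 := by omega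
    interval_cases b <;> interval_cases c <;> rcases hs with h'|h'|h'|h' <;> omega
  · have h8 : q*8 ≤ q*(4*b+6*c) := Nat.mul_le_mul_left q hv
    omega


theorem aux (q : ℕ) (hq : 2 ≤ q)
    (hs : q % 15 = 1 ∨ q % 15 = 2 ∨ q % 15 = 4 ∨ q % 15 = 8) :
    ∃ S : NumericalSemigroup,
      S.carrier = (AddSubmonoid.closure ({15, 15+4*q, 15+6*q, 15+7*q} : Set ℕ) : Set ℕ) ∧
      S.MinGen4 15 (15+4*q) (15+6*q) (15+7*q) ∧
      S.AlmostSymmetric ∧ S.typ = 3 ∧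
      S.PF = {15+8*q, 2*(15+8*q), 3*(15+8*q)} := by
  have hPFset : {f : ℕ | f ∉ (Tq q : Set ℕ) ∧ ∀ s ∈ (Tq q : Set ℕ), s ≠ 0 → f + s ∈ (Tq q : Set ℕ)}
      = ({15+8*q, 2*(15+8*q), 3*(15+8*q)} : Set ℕ) := by
    ext x
    simp only [Set.mem_setOf_eq, SetLike.mem_coe, Set.mem_insert_iff, Set.mem_singleton_iff]
    exact PF_char hs hq x
  have hcard3 : ({15+8*q, 2*(15+8*q), 3*(15+8*q)} : Set ℕ).ncard = 3 := by
    rw [Set.ncard_insert_of_notMem (by simp only [Set.mem_insert_iff, Set.mem_singleton_iff]; omega), Set.ncard_pair (by omega)]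
  have hcomp : ((Tq q : Set ℕ))ᶜ = ↑(Gfin q) := by
    ext x
    simp only [Set.mem_compl_iff, SetLike.mem_coe, Finset.coe_sort_coe, Finset.mem_coe]
    exact (mem_Gfin hs).symm
  refine ⟨⟨(Tq q : Set ℕ), (Tq q).zero_mem,
      fun ha hb => (Tq q).add_mem ha hb, by rw [hcomp]; exact (Gfin q).finite_toSet⟩,
    rfl, ⟨?_, rfl, ?_⟩, ?_, ?_, ?_⟩
  · -- pairwise distinct
    constructor
    · intro a ha
      simp only [List.mem_cons, List.mem_singleton, List.not_mem_nil, or_false] at ha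
      rcases ha with rfl|rfl|rfl <;> omega
    constructor
    · intro a ha
      simp only [List.mem_cons, List.mem_singleton, List.not_mem_nil, or_false] at ha
      rcases ha with rfl|rfl <;> omega
    constructor
    · intro a ha
      simp only [List.mem_singleton, List.not_mem_nil, List.mem_cons, or_false] at ha
      rcases ha with rfl <;> omega
    constructor
    · intro a ha
      simp at ha
    exact List.Pairwise.nil
  · -- minimality
    intro B hB hEq
    obtain ⟨g, hgS, hgB⟩ := Set.exists_of_ssubset hB
    have hgT : g ∈ Tq q := subset_closure hgS
    have hgclB : g ∈ AddSubmonoid.closure B := by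
      have : g ∈ (AddSubmonoid.closure B : Set ℕ) := by
        rw [← hEq]; exact hgT
      exact this
    rcases hgS with rfl|rfl|rfl|rfl
    · have hsub : B ⊆ ({15+4*q, 15+6*q, 15+7*q} : Set ℕ) := by
        intro x hx
        have h4 := hB.subset hx
        rcases h4 with rfl|h4
        · exact absurd hx hgB
        · exact h4
      exact not_g1 hq (closure_mono hsub hgclB)
    · have hsub : B ⊆ ({15, 15+6*q, 15+7*q} : Set ℕ) := by
        intro x hx
        have h4 := hB.subset hx
        rcases h4 with rfl|rfl|h4
        · exact Set.mem_insert _ _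
        · exact absurd hx hgB
        · exact Set.mem_insert_of_mem _ h4
      exact not_g2 hq hs (closure_mono hsub hgclB)
    · have hsub : B ⊆ ({15, 15+4*q, 15+7*q} : Set ℕ) := by
        intro x hx
        have h4 := hB.subset hx
        rcases h4 with rfl|rfl|rfl|h4
        · exact Set.mem_insert _ _
        · exact Set.mem_insert_of_mem _ (Set.mem_insert _ _)
        · exact absurd hx hgB
        · exact Set.mem_insert_of_mem _ (Set.mem_insert_of_mem _ h4)
      exact not_g3 hq hs (closure_mono hsub hgclB)
    · have hsub : B ⊆ ({15, 15+4*q, 15+6*q} : Set ℕ) := by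
        intro x hx
        have h4 := hB.subset hx
        rcases h4 with rfl|rfl|rfl|rfl
        · exact Set.mem_insert _ _
        · exact Set.mem_insert_of_mem _ (Set.mem_insert _ _)
        · exact Set.mem_insert_of_mem _ (Set.mem_insert_of_mem _ rfl)
        · exact absurd hx hgB
      exact not_g4 hq hs (closure_mono hsub hgclB)
  · -- almost symmetric
    show 2 * ((Tq q : Set ℕ))ᶜ.ncard = sSup (((Tq q : Set ℕ))ᶜ) +
      {f : ℕ | f ∉ (Tq q : Set ℕ) ∧ ∀ s ∈ (Tq q : Set ℕ), s ≠ 0 → f + s ∈ (Tq q : Set ℕ)}.ncard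
    rw [hPFset, hcard3, frob_eq hs hq, hcomp, Set.ncard_coe_finset, Gcard hs]
    omega
  · -- type three
    show {f : ℕ | f ∉ (Tq q : Set ℕ) ∧ ∀ s ∈ (Tq q : Set ℕ), s ≠ 0 → f + s ∈ (Tq q : Set ℕ)}.ncard = 3
    rw [hPFset]
    exact hcard3
  · -- PF set
    show {f : ℕ | f ∉ (Tq q : Set ℕ) ∧ ∀ s ∈ (Tq q : Set ℕ), s ≠ 0 → f + s ∈ (Tq q : Set ℕ)} = _
    exact hPFset

lemma pow2_mod15 : ∀ n : ℕ, 2^n % 15 = 1 ∨ 2^n % 15 = 2 ∨ 2^n % 15 = 4 ∨ 2^n % 15 = 8 := by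
  intro n
  induction n with
  | zero => omega
  | succ k ih =>
    rw [pow_succ, Nat.mul_mod]
    rcases ih with h|h|h|h <;> rw [h] <;> omega

end ATF

theorem almostSymmetric_type_three_family (n : ℕ) (hn : 0 < n) :
    ∃ S : NumericalSemigroup,
      S.carrier = (AddSubmonoid.closure
        ({15, 15 + 2 ^ (n + 2), 15 + 2 ^ (n + 2) + 2 ^ (n + 1),
          15 + 2 ^ (n + 2) + 2 ^ (n + 1) + 2 ^ n} : Set ℕ) : Set ℕ) ∧
      S.MinGen4 15 (15 + 2 ^ (n + 2)) (15 + 2 ^ (n + 2) + 2 ^ (n + 1))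
        (15 + 2 ^ (n + 2) + 2 ^ (n + 1) + 2 ^ n) ∧
      Odd (15 : ℕ) ∧ Odd (15 + 2 ^ (n + 2)) ∧
      Odd (15 + 2 ^ (n + 2) + 2 ^ (n + 1)) ∧
      Odd (15 + 2 ^ (n + 2) + 2 ^ (n + 1) + 2 ^ n) ∧
      S.AlmostSymmetric ∧ S.typ = 3 ∧
      S.PF = {15 + 2 ^ (n + 3), 2 * (15 + 2 ^ (n + 3)), 3 * (15 + 2 ^ (n + 3))} := by
  have hq : 2 ≤ 2^n := by
    calc (2:ℕ) = 2^1 := by norm_num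
    _ ≤ 2^n := Nat.pow_le_pow_right (by norm_num) hn
  have hs := ATF.pow2_mod15 n
  obtain ⟨S, hcar, hmin, hAS, htyp, hPF⟩ := ATF.aux (2^n) hq hs
  have e4 : (15 + 2 ^ (n + 2) : ℕ) = 15 + 4 * 2^n := by ring
  have e6 : (15 + 2 ^ (n + 2) + 2 ^ (n + 1) : ℕ) = 15 + 6 * 2^n := by ring
  have e7 : (15 + 2 ^ (n + 2) + 2 ^ (n + 1) + 2 ^ n : ℕ) = 15 + 7 * 2^n := by ring
  have e8 : (15 + 2 ^ (n + 3) : ℕ) = 15 + 8 * 2^n := by ring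
  have hev : ∀ m, 1 ≤ m → 2^m % 2 = 0 := by
    intro m hm
    have : (2:ℕ) ∣ 2^m := dvd_pow_self 2 (by omega)
    omega
  have o2 : Odd (15 + 2 ^ (n + 2) : ℕ) := by
    rw [Nat.odd_iff]
    have := hev (n+2) (by omega)
    omega
  have o3 : Odd (15 + 2 ^ (n + 2) + 2 ^ (n + 1) : ℕ) := by
    rw [Nat.odd_iff]
    have h1 := hev (n+2) (by omega)
    have h2 := hev (n+1) (by omega)
    omega
  have o4 : Odd (15 + 2 ^ (n + 2) + 2 ^ (n + 1) + 2 ^ n : ℕ) := by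
    rw [Nat.odd_iff]
    have h1 := hev (n+2) (by omega)
    have h2 := hev (n+1) (by omega)
    have h3 := hev n hn
    omega
  refine ⟨S, ?_, ?_, by decide, o2, o3, o4, hAS, htyp, ?_⟩
  · rw [e7, e6, e4]
    exact hcar
  · rw [e7, e6, e4]
    exact hmin
  · rw [e8]
    exact hPF
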